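/- Let (Ω, P) be a probability space, let n ≥ 1 and 1 ≤ k ≤ n, let C ≥ 0 and B > 0. Let Z₁,…,Z_n be fixed real numbers (the ideal calibration scores) and let Z̃₁,…,Z̃_n : Ω → ℝ be square-integrable random variables (the empirical calibration scores) satisfying E[(Z̃_i − Z_i)²] ≤ C / B for every i = 1,…,n. Let q denote the k-th order statistic of (Z₁,…,Z_n) and let Q(ω) denote the k-th order statistic of (Z̃₁(ω),…,Z̃_n(ω)). Then E[|Q − q|] ≤ 2√(n·C / B). (Theorem 2, threshold stability: the bank-induced error in the conformal calibration threshold decays at rate O(1/√B).) -/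

import Mathlib

open MeasureTheory ProbabilityTheory

lemma sort_le_of_le {n : ℕ} (a b : Fin n → ℝ) (ε : ℝ)
    (h : ∀ i, a i ≤ b i + ε) (k : Fin n) :
    a (Tuple.sort a k) ≤ b (Tuple.sort b k) + ε := by
  set σ := Tuple.sort a with hσ
  set τ := Tuple.sort b with hτ
  set S := (Finset.Ici k).image σ with hS
  set T := (Finset.Iic k).image τ with hT
  have hcardS : S.card = n - k := by
    rw [hS, Finset.card_image_of_injective _ σ.injective, Fin.card_Ici]
  have hcardT : T.card = k + 1 := by
    rw [hT, Finset.card_image_of_injective _ τ.injective, Fin.card_Iic]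
  have hinter : (S ∩ T).Nonempty := by
    rw [← Finset.card_pos]
    have h1 := Finset.card_union_add_card_inter S T
    have h2 : (S ∪ T).card ≤ n := by
      simpa using Finset.card_le_card (Finset.subset_univ (S ∪ T))
    have : n - (k : ℕ) + (k + 1) = n + 1 := by omega
    omega
  obtain ⟨i, hi⟩ := hinter
  rw [Finset.mem_inter] at hi
  obtain ⟨j, hj, hji⟩ := Finset.mem_image.mp hi.1
  obtain ⟨l, hl, hli⟩ := Finset.mem_image.mp hi.2
  have h1 : a (σ k) ≤ a (σ j) := Tuple.monotone_sort a (Finset.mem_Ici.mp hj)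
  have h2 : b (τ l) ≤ b (τ k) := Tuple.monotone_sort b (Finset.mem_Iic.mp hl)
  calc a (σ k) ≤ a i := by rwa [← hji]
    _ ≤ b i + ε := h i
    _ = b (τ l) + ε := by rw [← hli]
    _ ≤ b (τ k) + ε := by linarith

/-- Theorem 2 (threshold stability): let `Z₁, …, Z_n` be fixed ideal calibration scores
and `Z̃₁, …, Z̃_n` square-integrable empirical calibration scores with
`E[(Z̃_i − Z_i)²] ≤ C / B`. If `q` is the `k`-th order statistic of `Z` and
`Q(ω)` the `k`-th order statistic of `(Z̃₁(ω), …, Z̃_n(ω))` (order statistics realized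
via `Tuple.sort`), then `E[|Q − q|] ≤ 2√(n·C / B)`. -/
theorem threshold_stability {Ω : Type*} [MeasureSpace Ω]
    [IsProbabilityMeasure (ℙ : Measure Ω)]
    (n : ℕ) (hn : 1 ≤ n) (k : Fin n) (C B : ℝ) (hC : 0 ≤ C) (hB : 0 < B)
    (Z : Fin n → ℝ) (Zt : Fin n → Ω → ℝ)
    (hmeas : ∀ i, Measurable (Zt i))
    (hL2 : ∀ i, MemLp (Zt i) 2 ℙ)
    (hmse : ∀ i, (∫ ω, (Zt i ω - Z i) ^ 2 ∂ℙ) ≤ C / B) :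
    (∫ ω, |(fun i => Zt i ω) (Tuple.sort (fun i => Zt i ω) k) - Z (Tuple.sort Z k)| ∂ℙ)
      ≤ 2 * Real.sqrt (n * C / B) := by
  set g : Ω → ℝ := fun ω => Real.sqrt (∑ i, (Zt i ω - Z i) ^ 2) with hg
  have hg_nonneg : ∀ ω, 0 ≤ g ω := fun ω => Real.sqrt_nonneg _
  have hsum_nonneg : ∀ ω, (0:ℝ) ≤ ∑ i, (Zt i ω - Z i) ^ 2 := fun ω =>
    Finset.sum_nonneg fun i _ => sq_nonneg _
  have hgsq : ∀ ω, g ω ^ 2 = ∑ i, (Zt i ω - Z i) ^ 2 := fun ω =>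
    Real.sq_sqrt (hsum_nonneg ω)
  -- pointwise bound on each coordinate
  have hcoord : ∀ ω i, |Zt i ω - Z i| ≤ g ω := by
    intro ω i
    rw [← Real.sqrt_sq_eq_abs]
    exact Real.sqrt_le_sqrt (Finset.single_le_sum (f := fun j => (Zt j ω - Z j) ^ 2) (fun j _ => sq_nonneg _) (Finset.mem_univ i))
  -- pointwise bound on order statistics
  have hpt : ∀ ω, |(fun i => Zt i ω) (Tuple.sort (fun i => Zt i ω) k) - Z (Tuple.sort Z k)|
      ≤ g ω := by
    intro ω
    rw [abs_le]
    constructor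
    · have := sort_le_of_le Z (fun i => Zt i ω) (g ω)
        (fun i => by have := hcoord ω i; rw [abs_le] at this; linarith) k
      linarith
    · have := sort_le_of_le (fun i => Zt i ω) Z (g ω)
        (fun i => by have := hcoord ω i; rw [abs_le] at this; linarith) k
      linarith
  -- measurability and integrability
  have hmeas_g : Measurable g := by
    apply Measurable.sqrt
    exact Finset.measurable_sum _ fun i _ => ((hmeas i).sub measurable_const).pow_const 2
  have hint_sq : Integrable (fun ω => ∑ i, (Zt i ω - Z i) ^ 2) ℙ := by
    apply integrable_finset_sum
    intro i _
    have h2 : MemLp (fun ω => Zt i ω - Z i) 2 ℙ := (hL2 i).sub (memLp_const (Z i))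
    simpa [sq] using h2.integrable_sq
  have hg_L2 : MemLp g 2 ℙ :=
    (memLp_two_iff_integrable_sq hmeas_g.aestronglyMeasurable).2
      (by simpa [hgsq] using hint_sq)
  have hg_int : Integrable g ℙ := hg_L2.integrable one_le_two
  -- step 1 : integral of |Q - q| ≤ integral of g
  have step1 : (∫ ω, |(fun i => Zt i ω) (Tuple.sort (fun i => Zt i ω) k)
      - Z (Tuple.sort Z k)| ∂ℙ) ≤ ∫ ω, g ω ∂ℙ :=
    integral_mono_of_nonneg (Filter.Eventually.of_forall fun ω => abs_nonneg _)
      hg_int (Filter.Eventually.of_forall hpt)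
  -- step 2 : Cauchy–Schwarz : ∫ g ≤ sqrt (∫ g²)
  have step2 : (∫ ω, g ω ∂ℙ) ≤ Real.sqrt (∫ ω, g ω ^ 2 ∂ℙ) := by
    have hcs := integral_mul_le_Lp_mul_Lq_of_nonneg (μ := ℙ)
      (Real.HolderConjugate.two_two : Real.HolderConjugate 2 2)
      (Filter.Eventually.of_forall hg_nonneg)
      (Filter.Eventually.of_forall fun _ => zero_le_one)
      (g := fun _ => (1:ℝ)) (by simpa using hg_L2) (by simpa using (memLp_const (1:ℝ)))
    simp only [mul_one, Real.rpow_two, one_pow] at hcs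
    calc (∫ ω, g ω ∂ℙ) ≤ (∫ ω, g ω ^ 2 ∂ℙ) ^ ((2:ℝ)⁻¹) := by simpa using hcs
      _ = Real.sqrt (∫ ω, g ω ^ 2 ∂ℙ) := by rw [Real.sqrt_eq_rpow]; norm_num
  -- step 3 : ∫ g² ≤ n * C / B
  have step3 : (∫ ω, g ω ^ 2 ∂ℙ) ≤ n * C / B := by
    have : (∫ ω, g ω ^ 2 ∂ℙ) = ∑ i, ∫ ω, (Zt i ω - Z i) ^ 2 ∂ℙ := by
      rw [← integral_finset_sum]
      · exact integral_congr_ae (Filter.Eventually.of_forall fun ω => hgsq ω)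
      · intro i _
        have h2 : MemLp (fun ω => Zt i ω - Z i) 2 ℙ := (hL2 i).sub (memLp_const (Z i))
        simpa [sq] using h2.integrable_sq
    rw [this]
    calc (∑ i, ∫ ω, (Zt i ω - Z i) ^ 2 ∂ℙ) ≤ ∑ _i : Fin n, C / B :=
          Finset.sum_le_sum fun i _ => hmse i
      _ = n * (C / B) := by simp [Finset.sum_const, mul_comm]
      _ = n * C / B := by ring
  calc (∫ ω, |(fun i => Zt i ω) (Tuple.sort (fun i => Zt i ω) k) - Z (Tuple.sort Z k)| ∂ℙ)
      ≤ Real.sqrt (∫ ω, g ω ^ 2 ∂ℙ) := step1.trans step2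
    _ ≤ Real.sqrt (n * C / B) := Real.sqrt_le_sqrt step3
    _ ≤ 2 * Real.sqrt (n * C / B) := by nlinarith [Real.sqrt_nonneg ((n:ℝ) * C / B)]
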